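/- Let X be an array and let λ ∈ 𝓗_{e,j}(X) be an (e,j)-hook of X for some (e,j) ∈ ℕ×(ℤ/2ℤ). Then for every (d,i) ∈ ℕ×(ℤ/2ℤ), 𝓗_{d,i}(X) ⊆ 𝓗_{d,i}(X∖_{e,j}λ) ∪ {λ, D_{e−d,i+j}(λ)}. -/

import Mathlib

open Finset

namespace ArrayComb

/-- Cells of an array: an element of ℤ × ℤ/2ℤ (arrays are those supported on ℕ × ℤ/2ℤ). -/
abbrev Cell : Type := ℤ × ZMod 2

/-- An array is a finite subset of ℕ × ℤ/2ℤ. -/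
def IsArray (X : Finset Cell) : Prop := ∀ c ∈ X, 0 ≤ c.1

/-- The row `Xʲ = {x : (x,j) ∈ X}`. -/
def row (X : Finset Cell) (j : ZMod 2) : Finset ℤ :=
  (X.filter fun c => c.2 = j).image Prod.fst

def cup (X : Finset Cell) : Finset ℤ := row X 0 ∪ row X 1
def cap (X : Finset Cell) : Finset ℤ := row X 0 ∩ row X 1
def sdiff' (X : Finset Cell) : Finset ℤ := symmDiff (row X 0) (row X 1)

/-- The pairing `⟨A,B⟩ = |A ∩ B| mod 2`. -/
def pairing (A B : Finset ℤ) : ZMod 2 := ((A ∩ B).card : ZMod 2)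

/-- The defect `Def(X) = |X⁰| - |X¹|`. -/
def defect (X : Finset Cell) : ℤ := ((row X 0).card : ℤ) - ((row X 1).card : ℤ)

/-- The special array `X_sp`. -/
noncomputable def sp (X : Finset Cell) : Finset Cell :=
  ((cap X) ×ˢ (Finset.univ : Finset (ZMod 2))) ∪
    (sdiff' X).image (fun x => (x, (((sdiff' X).card : ZMod 2) + pairing (sdiff' X) (Finset.Icc 0 x))))

/-- `X^♯ = X¹ ⊖ (X_sp)¹`. -/
noncomputable def sharp (X : Finset Cell) : Finset ℤ := symmDiff (row X 1) (row (sp X) 1)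

/-- `s(X) = 2^{(|X^⊖| - Def(X_sp))/2}`. -/
noncomputable def sconst (X : Finset Cell) : ℕ := 2 ^ (((sdiff' X).card - (defect (sp X)).toNat) / 2)

/-- `d(X) = (Def(X) - Def(X_sp))/2`. -/
noncomputable def dd (X : Finset Cell) : ℤ := (defect X - defect (sp X)) / 2

/-- The map `D_{d,i}` on cells. -/
def Dcell (d : ℤ) (i : ZMod 2) (c : Cell) : Cell := (c.1 - d, i + c.2)

/-- The map `D_{d,i}` applied elementwise to a finite set of cells. -/
def Dset (d : ℤ) (i : ZMod 2) (H : Finset Cell) : Finset Cell := H.image (Dcell d i)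

/-- `X ∖_{d,i} H = X ⊖ H ⊖ D_{d,i}(H)`. -/
def remove (d : ℤ) (i : ZMod 2) (X H : Finset Cell) : Finset Cell :=
  symmDiff (symmDiff X H) (Dset d i H)

/-- The `(d,i)`-hooks of `X`. -/
def hooks (d : ℤ) (i : ZMod 2) (X : Finset Cell) : Finset Cell :=
  X.filter fun c => 0 ≤ c.1 - d ∧ Dcell d i c ∉ X

/-- The leg parity `l_{d,i}(λ, X)`. -/
noncomputable def leg (d : ℤ) (i : ZMod 2) (c : Cell) (X : Finset Cell) : ZMod 2 :=
  pairing (Finset.Icc 0 c.1) (row X c.2) +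
    pairing (Finset.Icc 0 (c.1 - d)) (row (remove d i X {c}) (i + c.2))

/-- `X^op`, interchanging the two rows. -/
def opA (X : Finset Cell) : Finset Cell := Dset 0 1 X

/-- The free ℂ-module `ℂ[𝒫]` on the set of arrays. -/
abbrev CP := Finset Cell →₀ ℂ

/-- The similarity class `Sim(X)`: all arrays `Y` with `Y^∪ = X^∪` and `Y^∩ = X^∩`,
realized as a finite set. -/
def SimSet (X : Finset Cell) : Finset (Finset Cell) :=
  ((cup X ×ˢ (Finset.univ : Finset (ZMod 2))).powerset).filter
    (fun Y => cup Y = cup X ∧ cap Y = cap X)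

/-- The Fourier transform `𝓡` on basis elements. -/
noncomputable def Rfun (X : Finset Cell) : CP :=
  (sconst X : ℂ)⁻¹ •
    ∑ Y ∈ SimSet X, ((-1 : ℂ) ^ (pairing (sharp X) (sharp Y)).val) • Finsupp.single Y (1 : ℂ)

/-- The hook-removal operator `𝓗ʲ_{d,i}` on basis elements. -/
noncomputable def Hfun (d : ℤ) (i j : ZMod 2) (X : Finset Cell) : CP :=
  ∑ c ∈ hooks d i X,
    ((-1 : ℂ) ^ (j * c.2 + leg d i c X).val) • Finsupp.single (remove d i X {c}) (1 : ℂ)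

/-- Extension of a map defined on basis elements to a ℂ-linear endomorphism of `ℂ[𝒫]`. -/
noncomputable def lift (f : Finset Cell → CP) : CP →ₗ[ℂ] CP :=
  Finsupp.linearCombination ℂ f

/-- Hook inclusion: if `λ` is an `(e,j)`-hook of `X`, then every `(d,i)`-hook of `X` is
either a `(d,i)`-hook of `X∖_{e,j}λ` or one of `λ`, `D_{e-d,i+j}(λ)`. -/
theorem hook_inclusion (X : Finset Cell) (hX : IsArray X) (e : ℕ) (j : ZMod 2)
    (lam : Cell) (hlam : lam ∈ hooks (e : ℤ) j X) (d : ℕ) (i : ZMod 2) :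
    hooks (d : ℤ) i X ⊆
      hooks (d : ℤ) i (remove (e : ℤ) j X {lam}) ∪
        ({lam, Dcell ((e : ℤ) - (d : ℤ)) (i + j) lam} : Finset Cell) := by
  intro c hc
  simp only [hooks, mem_filter] at hc hlam
  obtain ⟨hcX, hcd, hcD⟩ := hc
  obtain ⟨hlX, hle, hlD⟩ := hlam
  by_cases h1 : c = lam
  · exact mem_union_right _ (by simp [h1])
  by_cases h2 : c = Dcell ((e : ℤ) - (d : ℤ)) (i + j) lam
  · exact mem_union_right _ (by simp [h2])
  refine mem_union_left _ ?_
  have hμ : c ≠ Dcell (e : ℤ) j lam := fun h => hlD (h ▸ hcX)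
  have hDl : Dcell (d : ℤ) i c ≠ lam := fun h => hcD (h ▸ hlX)
  have hDμ : Dcell (d : ℤ) i c ≠ Dcell (e : ℤ) j lam := by
    intro h
    apply h2
    have hfst := congrArg Prod.fst h
    have hsnd := congrArg Prod.snd h
    simp only [Dcell] at hfst hsnd ⊢
    have h20 : (2 : ZMod 2) = 0 := rfl
    exact Prod.ext (by omega) (by linear_combination hsnd - i * h20)
  simp only [hooks, mem_filter, remove, Dset, Finset.image_singleton,
    Finset.mem_symmDiff, Finset.mem_singleton]
  refine ⟨Or.inl ⟨Or.inl ⟨hcX, h1⟩, hμ⟩, hcd, ?_⟩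
  rintro (⟨(⟨hD, -⟩ | ⟨hD, -⟩), -⟩ | ⟨hD, -⟩)
  · exact hcD hD
  · exact hDl hD
  · exact hDμ hD

end ArrayComb
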